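/- Let K be a complete discretely valued field with normalized valuation v, residue field of cardinality 2, and v(2) = 4, and let τ be a uniformizer. If v(τ⁴ + 2) = 12, then −1 is a sum of 3 fourth powers in K. -/

import Mathlib

lemma aux_coe_mono {a b : ℤ} (h : a ≤ b) : ((a : ℤ) : WithTop ℤ) ≤ (b : ℤ) :=
  WithTop.coe_le_coe.2 h

lemma aux_ge_add {x y : WithTop ℤ} {a b c : ℤ} (hx : (a : WithTop ℤ) ≤ x)
    (hy : (b : WithTop ℤ) ≤ y) (h : c ≤ a + b) : (c : WithTop ℤ) ≤ x + y := by
  calc (c : WithTop ℤ) ≤ ((a + b : ℤ) : WithTop ℤ) := aux_coe_mono h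
    _ = (a : WithTop ℤ) + (b : WithTop ℤ) := by rw [WithTop.coe_add]
    _ ≤ x + y := add_le_add hx hy

lemma aux_cancel_le {x : WithTop ℤ} {a b : ℤ} (h : ((b : ℤ) : WithTop ℤ) ≤ x + (a : ℤ)) :
    ((b - a : ℤ) : WithTop ℤ) ≤ x := by
  cases x with
  | top => exact le_top
  | coe m =>
    have : b ≤ m + a := by exact_mod_cast h
    exact_mod_cast (by omega : b - a ≤ m)

lemma aux_cancel_eq {x : WithTop ℤ} {a b : ℤ} (h : x + ((a : ℤ) : WithTop ℤ) = (b : ℤ)) :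
    x = ((b - a : ℤ) : WithTop ℤ) := by
  cases x with
  | top => simp at h
  | coe m =>
    have : m + a = b := by exact_mod_cast h
    exact_mod_cast (by omega : m = b - a)

lemma aux_pos_le_one {x : WithTop ℤ} (h : 0 < x) : ((1 : ℤ) : WithTop ℤ) ≤ x := by
  cases x with
  | top => exact le_top
  | coe m =>
    have : (0:ℤ) < m := by exact_mod_cast h
    exact_mod_cast this

lemma aux_top_of_forall {x : WithTop ℤ} (h : ∀ n : ℕ, ((n : ℤ) : WithTop ℤ) ≤ x) : x = ⊤ := by
  cases x with
  | top => rfl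
  | coe m =>
    have := h (m.toNat + 1)
    have hm : ((m.toNat : ℤ) + 1) ≤ m := by exact_mod_cast this
    omega

section aux
variable {K : Type*} [Field K] (v : K → WithTop ℤ)
variable (hv0 : ∀ x : K, v x = ⊤ ↔ x = 0)
variable (hvmul : ∀ x y : K, v (x * y) = v x + v y)
variable (hvadd : ∀ x y : K, min (v x) (v y) ≤ v (x + y))

include hv0 hvmul in
lemma aux_v_one : v 1 = 0 := by
  have h := hvmul 1 1
  rw [mul_one] at h
  cases h1 : v 1 with
  | top => exact absurd ((hv0 1).1 h1) one_ne_zero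
  | coe a =>
    rw [h1] at h
    have ha : a = a + a := by exact_mod_cast h
    have : a = 0 := by omega
    simp [this]

include hv0 hvmul in
lemma aux_v_neg_one : v (-1 : K) = 0 := by
  have h := hvmul (-1 : K) (-1)
  rw [neg_mul_neg, one_mul, aux_v_one v hv0 hvmul] at h
  cases h1 : v (-1 : K) with
  | top => exact absurd ((hv0 _).1 h1) (by norm_num)
  | coe a =>
    rw [h1] at h
    have ha : (0 : ℤ) = a + a := by exact_mod_cast h
    have : a = 0 := by omega
    simp [this]

include hv0 hvmul in
lemma aux_v_neg (x : K) : v (-x) = v x := by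
  have h := hvmul (-1 : K) x
  rw [aux_v_neg_one v hv0 hvmul, zero_add, neg_one_mul] at h
  exact h

include hv0 hvmul hvadd in
lemma aux_v_add_eq {x y : K} (hlt : v x < v y) : v (x + y) = v x := by
  refine le_antisymm ?_ (le_trans (le_min le_rfl hlt.le) (hvadd x y))
  by_contra hc
  push_neg at hc
  have h2 : x = (x + y) + (-y) := by ring
  have h3 := hvadd (x + y) (-y)
  rw [aux_v_neg v hv0 hvmul, ← h2] at h3
  exact absurd h3 (not_le.2 (lt_min hc hlt))

include hv0 hvmul in
lemma aux_v_pow (x : K) (n : ℕ) (a : ℤ) (hx : v x = (a : WithTop ℤ)) :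
    v (x ^ n) = ((n * a : ℤ) : WithTop ℤ) := by
  induction n with
  | zero => simpa using aux_v_one v hv0 hvmul
  | succ n ih =>
    rw [pow_succ, hvmul, ih, hx, ← WithTop.coe_add]
    congr 1
    push_cast
    ring

include hv0 hvmul in
lemma aux_v_pow_ge (x : K) (n : ℕ) (a : ℤ) (hx : (a : WithTop ℤ) ≤ v x) :
    ((n * a : ℤ) : WithTop ℤ) ≤ v (x ^ n) := by
  induction n with
  | zero => simp [aux_v_one v hv0 hvmul]
  | succ n ih =>
    rw [pow_succ, hvmul]
    calc (((n + 1 : ℕ) * a : ℤ) : WithTop ℤ) = ((n * a + a : ℤ) : WithTop ℤ) := by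
          congr 1; push_cast; ring
      _ = ((n * a : ℤ) : WithTop ℤ) + (a : WithTop ℤ) := by rw [← WithTop.coe_add]
      _ ≤ v (x ^ n) + v x := add_le_add ih hx

include hv0 hvmul hvadd in
lemma aux_v_sub (x y : K) : min (v x) (v y) ≤ v (x - y) := by
  have := hvadd x (-y)
  rwa [aux_v_neg v hv0 hvmul, ← sub_eq_add_neg] at this

end aux

/-- Let `K` be a complete discretely valued field with normalized (surjective)
valuation `v`, residue field of cardinality 2, and `v 2 = 4`, and let `τ` be a
uniformizer. If `v (τ⁴ + 2) = 12`, then `-1` is a sum of 3 fourth powers in `K`.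
Completeness is expressed by the convergence of Cauchy sequences with respect
to `v`. -/
theorem stmt_14 {K : Type*} [Field K] (v : K → WithTop ℤ)
    (hv0 : ∀ x : K, v x = ⊤ ↔ x = 0)
    (hvmul : ∀ x y : K, v (x * y) = v x + v y)
    (hvadd : ∀ x y : K, min (v x) (v y) ≤ v (x + y))
    (hsurj : ∀ n : ℤ, ∃ x : K, v x = (n : WithTop ℤ))
    (hres : ∀ x : K, v x = 0 → 0 < v (x - 1))
    (hcomplete : ∀ f : ℕ → K,
      (∀ n : ℕ, ∃ N : ℕ, ∀ i ≥ N, ∀ j ≥ N, ((n : ℤ) : WithTop ℤ) ≤ v (f i - f j)) →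
      ∃ L : K, ∀ n : ℕ, ∃ N : ℕ, ∀ i ≥ N, ((n : ℤ) : WithTop ℤ) ≤ v (f i - L))
    (h2 : v 2 = ((4 : ℤ) : WithTop ℤ))
    (τ : K) (hτ : v τ = ((1 : ℤ) : WithTop ℤ))
    (h : v (τ ^ 4 + 2) = ((12 : ℤ) : WithTop ℤ)) :
    ∃ x y z : K, x ^ 4 + y ^ 4 + z ^ 4 = -1 := by
  have v1 : v (1 : K) = ((0:ℤ) : WithTop ℤ) := by simpa using aux_v_one v hv0 hvmul
  have vneg : ∀ x : K, v (-x) = v x := aux_v_neg v hv0 hvmul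
  have vsub : ∀ x y : K, min (v x) (v y) ≤ v (x - y) := aux_v_sub v hv0 hvmul hvadd
  have vsubrev : ∀ x y : K, v (x - y) = v (y - x) := by
    intro x y; rw [← vneg (y - x)]; ring_nf
  -- basic nonvanishing
  have h2ne : (2 : K) ≠ 0 := by
    intro hh
    rw [hh, (hv0 0).2 rfl] at h2
    exact absurd h2.symm (by simp)
  have hτne : τ ≠ 0 := by
    intro hh
    rw [hh, (hv0 0).2 rfl] at hτ
    exact absurd hτ.symm (by simp)
  have h4ne : (4 : K) ≠ 0 := by
    have : (4 : K) = 2 * 2 := by norm_num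
    rw [this]; exact mul_ne_zero h2ne h2ne
  -- valuations of constants
  have v4 : v (4 : K) = ((8:ℤ) : WithTop ℤ) := by
    have : (4 : K) = 2 * 2 := by norm_num
    rw [this, hvmul, h2, ← WithTop.coe_add]; norm_num
  have v6 : v (6 : K) = ((4:ℤ) : WithTop ℤ) := by
    have h3 : v (3 : K) = ((0:ℤ) : WithTop ℤ) := by
      have e : (3 : K) = 1 + 2 := by norm_num
      rw [e, aux_v_add_eq v hv0 hvmul hvadd (by rw [v1, h2]; exact_mod_cast (by norm_num : (0:ℤ) < 4)), v1]
    have e : (6 : K) = 2 * 3 := by norm_num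
    rw [e, hvmul, h2, h3, ← WithTop.coe_add]; norm_num
  have vτ4 : v (τ ^ 4) = ((4:ℤ) : WithTop ℤ) := by
    have := aux_v_pow v hv0 hvmul τ 4 1 hτ
    simpa using this
  have vτ12 : v (τ ^ 12) = ((12:ℤ) : WithTop ℤ) := by
    have := aux_v_pow v hv0 hvmul τ 12 1 hτ
    simpa using this
  -- the residue field step: v (2 + τ^4 + τ^12) ≥ 13
  have hτ12ne : τ ^ 12 ≠ 0 := pow_ne_zero _ hτne
  have hq : v ((τ ^ 4 + 2) / τ ^ 12) = ((0:ℤ) : WithTop ℤ) := by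
    have hmul : ((τ ^ 4 + 2) / τ ^ 12) * τ ^ 12 = τ ^ 4 + 2 := div_mul_cancel₀ _ hτ12ne
    have := hvmul ((τ ^ 4 + 2) / τ ^ 12) (τ ^ 12)
    rw [hmul, h, vτ12] at this
    have := aux_cancel_eq this.symm
    simpa using this
  have hq1 := aux_pos_le_one (hres _ (by simpa using hq))
  have h13a : ((13:ℤ) : WithTop ℤ) ≤ v (τ ^ 4 + 2 - τ ^ 12) := by
    have hee : ((τ ^ 4 + 2) / τ ^ 12 - 1) * τ ^ 12 = τ ^ 4 + 2 - τ ^ 12 := by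
      field_simp
    have := hvmul ((τ ^ 4 + 2) / τ ^ 12 - 1) (τ ^ 12)
    rw [hee, vτ12] at this
    rw [this]
    exact aux_ge_add hq1 le_rfl (by norm_num)
  have h13 : ((13:ℤ) : WithTop ℤ) ≤ v (2 + τ ^ 4 + τ ^ 12) := by
    have he : 2 + τ ^ 4 + τ ^ 12 = (τ ^ 4 + 2 - τ ^ 12) + 2 * τ ^ 12 := by ring
    have hv2τ : v (2 * τ ^ 12) = ((16:ℤ) : WithTop ℤ) := by
      rw [hvmul, h2, vτ12, ← WithTop.coe_add]; norm_num
    rw [he]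
    refine le_trans ?_ (hvadd _ _)
    refine le_min h13a ?_
    rw [hv2τ]; exact aux_coe_mono (by norm_num)
  -- Newton iteration setup
  set c : K := -1 - τ ^ 4 - τ ^ 12 with hc
  have h13c : ((13:ℤ) : WithTop ℤ) ≤ v ((1:K) ^ 4 - c) := by
    have : (1:K) ^ 4 - c = 2 + τ ^ 4 + τ ^ 12 := by rw [hc]; ring
    rwa [this]
  set step : K → K := fun z => z - (z ^ 4 - c) / (4 * z ^ 3) with hstep
  -- the one-step Newton estimate
  have main : ∀ n : ℕ, ∀ z : K, ((5:ℤ) : WithTop ℤ) ≤ v (z - 1) →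
      ((12 + 2 ^ n : ℤ) : WithTop ℤ) ≤ v (z ^ 4 - c) →
      ((4 + 2 ^ n : ℤ) : WithTop ℤ) ≤ v (step z - z) ∧
      ((5:ℤ) : WithTop ℤ) ≤ v (step z - 1) ∧
      ((12 + 2 ^ (n+1) : ℤ) : WithTop ℤ) ≤ v (step z ^ 4 - c) := by
    intro n z hz1 hzF
    have hp : (0:ℤ) < 2 ^ n := by positivity
    have vz : v z = ((0:ℤ) : WithTop ℤ) := by
      have he : z = 1 + (z - 1) := by ring
      rw [he, aux_v_add_eq v hv0 hvmul hvadd (by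
        rw [v1]
        exact lt_of_lt_of_le (by exact_mod_cast (by norm_num : (0:ℤ) < 5)) hz1), v1]
    have hzne : z ≠ 0 := fun hh => by
      rw [hh, (hv0 0).2 rfl] at vz; exact absurd vz.symm (by simp)
    have hdne : (4 : K) * z ^ 3 ≠ 0 := mul_ne_zero h4ne (pow_ne_zero _ hzne)
    have vd : v (4 * z ^ 3) = ((8:ℤ) : WithTop ℤ) := by
      rw [hvmul, v4, aux_v_pow v hv0 hvmul z 3 0 vz, ← WithTop.coe_add]
      norm_num
    set u : K := -((z ^ 4 - c) / (4 * z ^ 3)) with hu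
    have hsz : step z = z + u := by rw [hstep, hu]; ring
    have hud : u * (4 * z ^ 3) = -(z ^ 4 - c) := by
      rw [hu]; field_simp
    have hvu : ((4 + 2 ^ n : ℤ) : WithTop ℤ) ≤ v u := by
      have := hvmul u (4 * z ^ 3)
      rw [hud, vneg, vd] at this
      have h2' : ((12 + 2 ^ n : ℤ) : WithTop ℤ) ≤ v u + ((8:ℤ) : WithTop ℤ) := by
        rw [← this]; exact hzF
      have := aux_cancel_le h2'
      have he : (12 + 2 ^ n - 8 : ℤ) = 4 + 2 ^ n := by ring
      rwa [he] at this
    have hvu5 : ((5:ℤ) : WithTop ℤ) ≤ v u :=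
      le_trans (aux_coe_mono (by omega)) hvu
    refine ⟨?_, ?_, ?_⟩
    · have : step z - z = u := by rw [hsz]; ring
      rwa [this]
    · have he : step z - 1 = (z - 1) + u := by rw [hsz]; ring
      rw [he]
      exact le_trans (le_min hz1 hvu5) (hvadd _ _)
    · have h43 : (4 : K) * z ^ 3 * u = -(z ^ 4 - c) := by
        rw [mul_comm ((4:K) * z ^ 3) u]; exact hud
      have hid : step z ^ 4 - c = 6 * z ^ 2 * u ^ 2 + (4 * z * u ^ 3 + u ^ 4) := by
        rw [hsz]; linear_combination h43
      have vu2 : ((8 + 2 * 2 ^ n : ℤ) : WithTop ℤ) ≤ v (u ^ 2) := by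
        have h0 := aux_v_pow_ge v hv0 hvmul u 2 (4 + 2 ^ n) hvu
        have he : ((2:ℕ) * (4 + 2 ^ n) : ℤ) = 8 + 2 * 2 ^ n := by push_cast; ring
        rwa [he] at h0
      have vu3 : ((12 + 3 * 2 ^ n : ℤ) : WithTop ℤ) ≤ v (u ^ 3) := by
        have h0 := aux_v_pow_ge v hv0 hvmul u 3 (4 + 2 ^ n) hvu
        have he : ((3:ℕ) * (4 + 2 ^ n) : ℤ) = 12 + 3 * 2 ^ n := by push_cast; ring
        rwa [he] at h0
      have vu4 : ((16 + 4 * 2 ^ n : ℤ) : WithTop ℤ) ≤ v (u ^ 4) := by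
        have h0 := aux_v_pow_ge v hv0 hvmul u 4 (4 + 2 ^ n) hvu
        have he : ((4:ℕ) * (4 + 2 ^ n) : ℤ) = 16 + 4 * 2 ^ n := by push_cast; ring
        rwa [he] at h0
      have t1 : ((12 + 2 ^ (n+1) : ℤ) : WithTop ℤ) ≤ v (6 * z ^ 2 * u ^ 2) := by
        rw [hvmul, hvmul, v6, aux_v_pow v hv0 hvmul z 2 0 vz]
        have e0 : ((4:ℤ) : WithTop ℤ) + (((2:ℕ) * 0 : ℤ) : WithTop ℤ) = ((4:ℤ) : WithTop ℤ) := by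
          norm_num
        rw [e0]
        exact aux_ge_add le_rfl vu2 (by rw [pow_succ]; linarith)
      have t2 : ((12 + 2 ^ (n+1) : ℤ) : WithTop ℤ) ≤ v (4 * z * u ^ 3) := by
        rw [hvmul, hvmul, v4, vz]
        have e0 : ((8:ℤ) : WithTop ℤ) + ((0:ℤ) : WithTop ℤ) = ((8:ℤ) : WithTop ℤ) := by norm_num
        rw [e0]
        exact aux_ge_add le_rfl vu3 (by rw [pow_succ]; linarith)
      have t3 : ((12 + 2 ^ (n+1) : ℤ) : WithTop ℤ) ≤ v (u ^ 4) :=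
        le_trans (aux_coe_mono (by rw [pow_succ]; linarith)) vu4
      rw [hid]
      refine le_trans (le_min t1 ?_) (hvadd _ _)
      exact le_trans (le_min t2 t3) (hvadd _ _)
  -- the iteration
  set g : ℕ → K := fun n => step^[n] 1 with hg
  have hg0 : g 0 = 1 := rfl
  have hgs : ∀ n, g (n+1) = step (g n) := fun n => Function.iterate_succ_apply' step n 1
  have key : ∀ n : ℕ, ((5:ℤ) : WithTop ℤ) ≤ v (g n - 1) ∧
      ((12 + 2 ^ n : ℤ) : WithTop ℤ) ≤ v (g n ^ 4 - c) := by
    intro n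
    induction n with
    | zero =>
      constructor
      · rw [hg0, sub_self, (hv0 0).2 rfl]; exact le_top
      · rw [hg0]; exact le_trans (aux_coe_mono (by norm_num)) h13c
    | succ n ih =>
      have hm := main n (g n) ih.1 ih.2
      rw [hgs n]
      exact ⟨hm.2.1, hm.2.2⟩
  have hdiff : ∀ n : ℕ, ((4 + 2 ^ n : ℤ) : WithTop ℤ) ≤ v (g (n+1) - g n) := by
    intro n
    have hm := (main n (g n) (key n).1 (key n).2).1
    rwa [← hgs n] at hm
  have vgn : ∀ n, v (g n) = ((0:ℤ) : WithTop ℤ) := by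
    intro n
    have he : g n = 1 + (g n - 1) := by ring
    rw [he, aux_v_add_eq v hv0 hvmul hvadd (by
      rw [v1]
      exact lt_of_lt_of_le (by exact_mod_cast (by norm_num : (0:ℤ) < 5)) (key n).1), v1]
  -- Cauchy
  have htel : ∀ i k : ℕ, ((i:ℤ) : WithTop ℤ) ≤ v (g (i + k) - g i) := by
    intro i k
    induction k with
    | zero => rw [Nat.add_zero, sub_self, (hv0 0).2 rfl]; exact le_top
    | succ k ih =>
      have he : g ((i+k)+1) - g i = (g ((i+k)+1) - g (i+k)) + (g (i+k) - g i) := by ring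
      rw [show i + (k+1) = (i+k)+1 from by ring, he]
      refine le_trans (le_min ?_ ih) (hvadd _ _)
      refine le_trans (aux_coe_mono ?_) (hdiff (i+k))
      have hp2 : (i + k : ℤ) < 2 ^ (i+k) := by exact_mod_cast Nat.lt_two_pow_self (n := i+k)
      have hk0 : (0:ℤ) ≤ (k:ℤ) := Int.natCast_nonneg k
      push_cast at hp2 ⊢
      linarith
  obtain ⟨L, hL⟩ := hcomplete g (by
    intro n
    refine ⟨n, fun i hi j hj => ?_⟩
    rcases le_total i j with hij | hij
    · rw [vsubrev]
      obtain ⟨k, rfl⟩ := Nat.exists_eq_add_of_le hij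
      exact le_trans (aux_coe_mono (by exact_mod_cast hi)) (htel i k)
    · obtain ⟨k, rfl⟩ := Nat.exists_eq_add_of_le hij
      exact le_trans (aux_coe_mono (by exact_mod_cast hj)) (htel j k))
  -- the limit satisfies L ^ 4 = c
  have hL0 : ((0:ℤ) : WithTop ℤ) ≤ v L := by
    obtain ⟨N, hN⟩ := hL 0
    have h1 := hN N le_rfl
    have he : L = g N + (-(g N - L)) := by ring
    rw [he]
    refine le_trans (le_min ?_ ?_) (hvadd _ _)
    · rw [vgn N]
    · rw [vneg]; exact le_trans (by exact_mod_cast le_rfl) h1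
  have hfin : ∀ n : ℕ, ((n:ℤ) : WithTop ℤ) ≤ v (L ^ 4 - c) := by
    intro n
    obtain ⟨N, hN⟩ := hL n
    set i := max N n with hi
    have h1 : ((n:ℤ) : WithTop ℤ) ≤ v (g i - L) := hN i (le_max_left _ _)
    have e1 : ((0:ℤ) : WithTop ℤ) ≤ v (L ^ 3) := by
      have h0 := aux_v_pow_ge v hv0 hvmul L 3 0 hL0; simpa using h0
    have e2 : ((0:ℤ) : WithTop ℤ) ≤ v (L ^ 2 * g i) := by
      rw [hvmul, vgn i]
      have h0 := aux_v_pow_ge v hv0 hvmul L 2 0 hL0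
      exact aux_ge_add (a := 0) (b := 0) (by simpa using h0) le_rfl (by norm_num)
    have e3 : ((0:ℤ) : WithTop ℤ) ≤ v (L * g i ^ 2) := by
      rw [hvmul, aux_v_pow v hv0 hvmul (g i) 2 0 (vgn i)]
      exact aux_ge_add hL0 le_rfl (by norm_num)
    have e4 : ((0:ℤ) : WithTop ℤ) ≤ v (g i ^ 3) := by
      rw [aux_v_pow v hv0 hvmul (g i) 3 0 (vgn i)]
      exact aux_coe_mono (by omega)
    have hcof : ((0:ℤ) : WithTop ℤ) ≤ v (L ^ 3 + L ^ 2 * g i + L * g i ^ 2 + g i ^ 3) := by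
      refine le_trans (le_min ?_ e4) (hvadd _ _)
      refine le_trans (le_min ?_ e3) (hvadd _ _)
      exact le_trans (le_min e1 e2) (hvadd _ _)
    have hfac : v (L ^ 4 - g i ^ 4)
        = v (L - g i) + v (L ^ 3 + L ^ 2 * g i + L * g i ^ 2 + g i ^ 3) := by
      rw [← hvmul]; congr 1; ring
    have hmain : ((n:ℤ) : WithTop ℤ) ≤ v (L ^ 4 - g i ^ 4) := by
      rw [hfac]
      refine aux_ge_add (a := (n:ℤ)) ?_ hcof (by omega)
      rw [vsubrev]; exact h1
    have hsecond : ((n:ℤ) : WithTop ℤ) ≤ v (g i ^ 4 - c) := by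
      refine le_trans (aux_coe_mono ?_) (key i).2
      have hni : n ≤ i := le_max_right _ _
      have hp2 : (i:ℤ) < 2 ^ i := by exact_mod_cast Nat.lt_two_pow_self (n := i)
      have hni' : (n:ℤ) ≤ (i:ℤ) := by exact_mod_cast hni
      linarith
    have he : L ^ 4 - c = (L ^ 4 - g i ^ 4) + (g i ^ 4 - c) := by ring
    rw [he]
    exact le_trans (le_min hmain hsecond) (hvadd _ _)
  have hzero : L ^ 4 - c = 0 := (hv0 _).1 (aux_top_of_forall hfin)
  have hL4 : L ^ 4 = c := sub_eq_zero.mp hzero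
  refine ⟨L, τ, τ ^ 3, ?_⟩
  rw [hc] at hL4
  linear_combination hL4
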